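/- Let (R, m) be a commutative noetherian local ring, M an R-module, and (I_λ)_{λ∈Λ} a family of ideals of R. If M is I_λ-excellent for every λ ∈ Λ, then M is (∑_λ I_λ)-excellent, where ∑_λ I_λ denotes the ideal generated by all the I_λ. -/

import Mathlib

/-- Folgerung 1.5: If `M` is `I_λ`-excellent (i.e. `I_λ•M = γ_{I_λ}(M)`) for every member of a
family of ideals `(I_λ)`, then `M` is `(∑_λ I_λ)`-excellent. -/
theorem iExcellent_iSup {R : Type u} [CommRing R] [IsNoetherianRing R] [IsLocalRing R]
    (M : Type v) [AddCommGroup M] [Module R M] {Λ : Type w} (I : Λ → Ideal R)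
    (hM : ∀ l, I l • (⊤ : Submodule R M) = ⨆ f : I l →ₗ[R] M, LinearMap.range f) :
    (⨆ l, I l) • (⊤ : Submodule R M) = ⨆ f : ↥(⨆ l, I l) →ₗ[R] M, LinearMap.range f := by
  set J : Ideal R := ⨆ l, I l with hJ
  apply le_antisymm
  · rw [Submodule.smul_le]
    intro r hr x _
    refine le_iSup (fun f : ↥J →ₗ[R] M => LinearMap.range f)
      ((LinearMap.toSpanSingleton R M x).comp J.subtype) ?_
    exact ⟨⟨r, hr⟩, rfl⟩
  · refine iSup_le fun f => ?_
    rintro y ⟨x, rfl⟩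
    obtain ⟨x, hx⟩ := x
    refine Submodule.iSup_induction' (motive := fun r (hr : r ∈ J) => f ⟨r, hr⟩ ∈ J • (⊤ : Submodule R M))
      I (fun l r hr => ?_) ?_ (fun a b ha hb iha ihb => ?_) hx
    · have hle : I l ≤ J := le_iSup I l
      have : f ⟨r, hle hr⟩ ∈ LinearMap.range (f.comp (Submodule.inclusion hle)) :=
        ⟨⟨r, hr⟩, rfl⟩
      have h2 : LinearMap.range (f.comp (Submodule.inclusion hle)) ≤ J • ⊤ := by
        refine le_trans (le_iSup (fun g : ↥(I l) →ₗ[R] M => LinearMap.range g) _) ?_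
        rw [← hM l]
        exact Submodule.smul_mono_left hle
      exact h2 this
    · simpa using (map_zero f ▸ Submodule.zero_mem _)
    · show f ⟨a + b, _⟩ ∈ J • ⊤
      have : (⟨a + b, add_mem ha hb⟩ : ↥J) = ⟨a, ha⟩ + ⟨b, hb⟩ := rfl
      rw [this, map_add]
      exact Submodule.add_mem _ iha ihb
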